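/- Let 𝒜 be an associative unital algebra and x, x₁, x₂, x₁₂ ∈ 𝒜 satisfying the cross-ratio equation α₁(x₁₂ - x₁)(x₁ - x)⁻¹ = α₂(x₁₂ - x₂)(x₂ - x)⁻¹ with α₁, α₂ ∈ K, and with all differences among the points appearing below invertible. For λ ∈ K and an oriented edge (x,u) with label α define L(u,x,α;λ) = [[1, x - u],[λα(x - u)⁻¹, 1]] ∈ M₂(𝒜). Then the zero curvature relation L(x₁₂,x₁,α₂;λ)·L(x₁,x,α₁;λ) = L(x₁₂,x₂,α₁;λ)·L(x₂,x,α₂;λ) holds for all λ ∈ K. -/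

import Mathlib

private lemma ringInverse_neg' {R : Type*} [Ring R] (y : R) (h : IsUnit y) :
    Ring.inverse (-y) = -Ring.inverse y := by
  obtain ⟨u, rfl⟩ := h
  rw [← Units.val_neg, Ring.inverse_unit, Ring.inverse_unit,
    show (-u)⁻¹ = -u⁻¹ from inv_eq_of_mul_eq_one_right (by rw [neg_mul_neg, mul_inv_cancel]),
    Units.val_neg]

theorem cross_ratio_zero_curvature {K : Type*} [Field K] {R : Type*} [Ring R] [Algebra K R]
    (x x1 x2 x12 : R) (α₁ α₂ : K)
    (h1 : IsUnit (x1 - x)) (h2 : IsUnit (x2 - x)) (h12 : IsUnit (x12 - x))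
    (h121 : IsUnit (x12 - x1)) (h122 : IsUnit (x12 - x2))
    (hcr : α₁ • ((x12 - x1) * Ring.inverse (x1 - x))
      = α₂ • ((x12 - x2) * Ring.inverse (x2 - x)))
    (L : R → R → K → K → Matrix (Fin 2) (Fin 2) R)
    (hL : ∀ (u x : R) (α l : K),
      L u x α l = !![(1 : R), x - u; (l * α) • Ring.inverse (x - u), (1 : R)]) :
    ∀ l : K, L x12 x1 α₂ l * L x1 x α₁ l = L x12 x2 α₁ l * L x2 x α₂ l := by
  intro l
  set a := Ring.inverse (x1 - x) with ha
  set b := Ring.inverse (x2 - x) with hb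
  set c := Ring.inverse (x12 - x1) with hc
  set d := Ring.inverse (x12 - x2) with hd
  set e := Ring.inverse (x12 - x) with he
  have hal : a * (x1 - x) = 1 := Ring.inverse_mul_cancel _ h1
  have har : (x1 - x) * a = 1 := Ring.mul_inverse_cancel _ h1
  have hbl : b * (x2 - x) = 1 := Ring.inverse_mul_cancel _ h2
  have hbr : (x2 - x) * b = 1 := Ring.mul_inverse_cancel _ h2
  have hcl : c * (x12 - x1) = 1 := Ring.inverse_mul_cancel _ h121
  have hcr' : (x12 - x1) * c = 1 := Ring.mul_inverse_cancel _ h121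
  have hdl : d * (x12 - x2) = 1 := Ring.inverse_mul_cancel _ h122
  have hdr : (x12 - x2) * d = 1 := Ring.mul_inverse_cancel _ h122
  have hel : e * (x12 - x) = 1 := Ring.inverse_mul_cancel _ h12
  have her : (x12 - x) * e = 1 := Ring.mul_inverse_cancel _ h12
  -- Step 1: α₁ • ((x12-x)*a) - α₂ • ((x12-x)*b) = (α₁ - α₂) • 1
  have hstep : α₁ • ((x12 - x) * a) - α₂ • ((x12 - x) * b) = (α₁ - α₂) • (1 : R) := by
    have h1' : (x12 - x1) * a = (x12 - x) * a - 1 := by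
      rw [show x12 - x1 = (x12 - x) - (x1 - x) by abel, sub_mul, har]
    have h2' : (x12 - x2) * b = (x12 - x) * b - 1 := by
      rw [show x12 - x2 = (x12 - x) - (x2 - x) by abel, sub_mul, hbr]
    have h3 := hcr
    rw [h1', h2', smul_sub, smul_sub] at h3
    rw [sub_smul]
    rw [sub_eq_sub_iff_add_eq_add] at h3 ⊢
    rw [h3, add_comm]
  -- Step 2 (G1): α₁ • a - α₂ • b = (α₁ - α₂) • e
  have G1 : α₁ • a - α₂ • b = (α₁ - α₂) • e := by
    have h4 := congrArg (fun r => e * r) hstep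
    simp only [mul_sub, mul_smul_comm, ← mul_assoc, hel, one_mul, mul_one] at h4
    exact h4
  -- Step 3 (RD): α₁ • (a * (x12 - x1)) = α₂ • (b * (x12 - x2))
  have RD : α₁ • (a * (x12 - x1)) = α₂ • (b * (x12 - x2)) := by
    have h1' : a * (x12 - x1) = a * (x12 - x) - 1 := by
      rw [show x12 - x1 = (x12 - x) - (x1 - x) by abel, mul_sub, hal]
    have h2' : b * (x12 - x2) = b * (x12 - x) - 1 := by
      rw [show x12 - x2 = (x12 - x) - (x2 - x) by abel, mul_sub, hbl]
    have h5 := congrArg (fun r => r * (x12 - x)) G1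
    simp only [sub_mul, smul_mul_assoc, mul_assoc, her, mul_one] at h5
    -- h5 : α₁ • (a*(x12-x)) - α₂ • (b*(x12-x)) = (α₁-α₂) • (e*(x12-x)) -- with e*(x12-x)=1?
    rw [hel] at h5
    rw [h1', h2', smul_sub, smul_sub, sub_eq_sub_iff_add_eq_add]
    rw [sub_smul] at h5
    have h6 := sub_eq_sub_iff_add_eq_add.mp h5
    rw [h6]
    rw [add_comm]
  -- Step 4 (F2): α₂ • (c * (x1 - x)) = α₁ • (d * (x2 - x))
  have F2 : α₂ • (c * (x1 - x)) = α₁ • (d * (x2 - x)) := by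
    by_cases hz : α₂ = 0
    · rw [hz, zero_smul] at RD ⊢
      have h0 : α₁ • (1 : R) = 0 := by
        have h7 := congrArg (fun r => (x1 - x) * r * c) RD
        simp only [mul_smul_comm, smul_mul_assoc, smul_zero, mul_zero, zero_mul] at h7
        rwa [show (x1 - x) * (a * (x12 - x1)) * c = 1 from by
          rw [← mul_assoc, har, one_mul, hcr']] at h7
      have : α₁ • (d * (x2 - x)) = (α₁ • (1 : R)) * (d * (x2 - x)) := by
        rw [smul_mul_assoc, one_mul]
      rw [this, h0, zero_mul]
    · have hB : b * (x12 - x2) = (α₂⁻¹ * α₁) • (a * (x12 - x1)) := by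
        calc b * (x12 - x2) = α₂⁻¹ • (α₂ • (b * (x12 - x2))) := by
              rw [smul_smul, inv_mul_cancel₀ hz, one_smul]
          _ = α₂⁻¹ • (α₁ • (a * (x12 - x1))) := by rw [RD]
          _ = (α₂⁻¹ * α₁) • (a * (x12 - x1)) := by rw [smul_smul]
      have hBB : (b * (x12 - x2)) * (d * (x2 - x)) = 1 := by
        rw [mul_assoc, ← mul_assoc (x12 - x2), hdr, one_mul, hbl]
      have hAA : (c * (x1 - x)) * (a * (x12 - x1)) = 1 := by
        rw [mul_assoc, ← mul_assoc (x1 - x), har, one_mul, hcl]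
      calc α₂ • (c * (x1 - x))
          = α₂ • ((c * (x1 - x)) * ((b * (x12 - x2)) * (d * (x2 - x)))) := by
            rw [hBB, mul_one]
        _ = α₂ • ((α₂⁻¹ * α₁) • (((c * (x1 - x)) * (a * (x12 - x1))) * (d * (x2 - x)))) := by
            rw [hB]; simp only [smul_mul_assoc, mul_smul_comm, mul_assoc]
        _ = α₂ • ((α₂⁻¹ * α₁) • (d * (x2 - x))) := by rw [hAA, one_mul]
        _ = α₁ • (d * (x2 - x)) := by rw [smul_smul, mul_inv_cancel_left₀ hz]
  -- Step 5 (dual identity): α₁ • a - α₂ • b = α₁ • d - α₂ • c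
  have dual1 : α₁ • a - α₂ • b = α₁ • d - α₂ • c := by
    have hce : c * (x1 - x) * e = c - e := by
      rw [show x1 - x = (x12 - x) - (x12 - x1) by abel, mul_sub, sub_mul,
        mul_assoc, her, mul_one, hcl, one_mul]
    have hde : d * (x2 - x) * e = d - e := by
      rw [show x2 - x = (x12 - x) - (x12 - x2) by abel, mul_sub, sub_mul,
        mul_assoc, her, mul_one, hdl, one_mul]
    have h8 := congrArg (fun r => r * e) F2
    simp only [smul_mul_assoc] at h8
    rw [hce, hde, smul_sub, smul_sub] at h8
    -- h8 : α₂ • c - α₂ • e = α₁ • d - α₁ • e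
    rw [G1, sub_smul]
    -- goal : α₁ • e - α₂ • e = α₁ • d - α₂ • c
    have h9 := sub_eq_sub_iff_add_eq_add.mp h8
    -- h9 : α₂ • c + α₁ • e = α₁ • d + α₂ • e
    rw [sub_eq_sub_iff_add_eq_add, add_comm (α₁ • e), h9, add_comm]
  have hia : Ring.inverse (x - x1) = -a := by
    rw [ha, show x - x1 = -(x1 - x) by rw [neg_sub], ringInverse_neg' _ h1]
  have hib : Ring.inverse (x - x2) = -b := by
    rw [hb, show x - x2 = -(x2 - x) by rw [neg_sub], ringInverse_neg' _ h2]
  have hic : Ring.inverse (x1 - x12) = -c := by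
    rw [hc, show x1 - x12 = -(x12 - x1) by rw [neg_sub], ringInverse_neg' _ h121]
  have hid : Ring.inverse (x2 - x12) = -d := by
    rw [hd, show x2 - x12 = -(x12 - x2) by rw [neg_sub], ringInverse_neg' _ h122]
  rw [hL, hL, hL, hL]
  ext i j
  fin_cases i <;> fin_cases j <;>
    simp [Matrix.mul_apply, Fin.sum_univ_two, hia, hib, hic, hid]
  · -- (0,0)
    rw [show (x1 - x12) * a = -((x12 - x1) * a) from by rw [← neg_mul, neg_sub],
      show (x2 - x12) * b = -((x12 - x2) * b) from by rw [← neg_mul, neg_sub],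
      smul_neg, smul_neg, neg_inj, mul_smul, mul_smul, hcr]
  · -- (1,0)
    have hd1 : (l * α₁) • a - (l * α₂) • b = (l * α₁) • d - (l * α₂) • c := by
      have := congrArg (fun r => l • r) dual1
      simpa only [smul_sub, smul_smul] using this
    simp only [← neg_add]
    rw [neg_inj, add_comm]
    exact sub_eq_sub_iff_add_eq_add.mp hd1
  · -- (1,1)
    rw [show c * (x - x1) = -(c * (x1 - x)) from by rw [show x - x1 = -(x1 - x) by rw [neg_sub], mul_neg],
      show d * (x - x2) = -(d * (x2 - x)) from by rw [show x - x2 = -(x2 - x) by rw [neg_sub], mul_neg],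
      smul_neg, smul_neg, neg_inj, mul_smul, mul_smul, F2]
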